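/- Let C, C', D, D' be categories and let Q : C → C', U : C → D, P : D → D', V : C' → D' be functors together with a natural isomorphism σ : Q ⋙ V ≅ U ⋙ P. Assume: Q is fully faithful and admits a right adjoint Q_* : C' → C; P is fully faithful and admits a right adjoint P_* : D' → D; V is conservative (reflects isomorphisms); and the base change transformation U ∘ Q_* → P_* ∘ V — defined as the composite U Q_* → P_* P U Q_* (unit of P ⊣ P_*) ≅ P_* V Q Q_* (via σ) → P_* V (counit of Q ⊣ Q_*) — is a natural isomorphism. Let E be the pseudo-pullback category D ×_{D'} C', whose objects are triples (d, c', φ) with d an object of D, c' an object of C', and φ : P(d) ≅ V(c') an isomorphism in D', and whose morphisms (d, c', φ) → (e, b', ψ) are pairs of morphisms (α : d → e, β : c' → b') with ψ ∘ P(α) = V(β) ∘ φ. Then the canonical functor C → E sending c to (U(c), Q(c), (σ_c)^{-1}) is an equivalence of categories. -/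

import Mathlib

open CategoryTheory

universe v₁ v₂ v₃ v₄ u₁ u₂ u₃ u₄

variable {C : Type u₁} [Category.{v₁} C] {C' : Type u₂} [Category.{v₂} C']
  {D : Type u₃} [Category.{v₃} D] {D' : Type u₄} [Category.{v₄} D']

/-- The pseudo-pullback (iso-comma) category `D ×_{D'} C'` of `P : D ⥤ D'` and
`V : C' ⥤ D'`: objects are triples `(d, c', φ)` with `φ : P.obj d ≅ V.obj c'`
(encoded as the full subcategory of the comma category `Comma P V` on those objects
whose structural morphism is an isomorphism); morphisms `(d, c', φ) ⟶ (e, b', ψ)` are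
pairs `(α : d ⟶ e, β : c' ⟶ b')` with `P.map α ≫ ψ = φ ≫ V.map β`. -/
def PseudoPullback (P : D ⥤ D') (V : C' ⥤ D') : Type _ :=
  ObjectProperty.FullSubcategory (fun Z : Comma P V => IsIso Z.hom)

instance (P : D ⥤ D') (V : C' ⥤ D') : Category (PseudoPullback P V) :=
  inferInstanceAs <| Category (ObjectProperty.FullSubcategory (fun Z : Comma P V => IsIso Z.hom))

/-- The canonical functor `C ⥤ D ×_{D'} C'` sending `c` to
`(U.obj c, Q.obj c, (σ.app c)⁻¹)`. -/
@[simps]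
def canonicalToPseudoPullback (Q : C ⥤ C') (U : C ⥤ D) (P : D ⥤ D') (V : C' ⥤ D')
    (σ : Q ⋙ V ≅ U ⋙ P) : C ⥤ PseudoPullback P V where
  obj c := ⟨⟨U.obj c, Q.obj c, σ.inv.app c⟩, inferInstance⟩
  map {c c₁} f :=
    { hom :=
      { left := U.map f
        right := Q.map f
        w := σ.inv.naturality f } }

/-- Given functors `Q : C ⥤ C'`, `U : C ⥤ D`, `P : D ⥤ D'`, `V : C' ⥤ D'`
with a natural isomorphism `σ : Q ⋙ V ≅ U ⋙ P`, where `Q` and `P` are fully faithful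
with right adjoints `Qs` and `Ps`, `V` is conservative, and the base change
transformation `U ∘ Q_* ⟶ P_* ∘ V` (unit of `P ⊣ Ps`, then `σ⁻¹`, then counit of
`Q ⊣ Qs`) is an isomorphism, the canonical functor from `C` to the pseudo-pullback
`D ×_{D'} C'`, sending `c` to `(U.obj c, Q.obj c, (σ.app c)⁻¹)`, is an equivalence of
categories. -/
theorem canonicalToPseudoPullback_isEquivalence
    (Q : C ⥤ C') (U : C ⥤ D) (P : D ⥤ D') (V : C' ⥤ D')
    (σ : Q ⋙ V ≅ U ⋙ P)
    (Qs : C' ⥤ C) (adjQ : Q ⊣ Qs) [Q.Full] [Q.Faithful]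
    (Ps : D' ⥤ D) (adjP : P ⊣ Ps) [P.Full] [P.Faithful]
    [V.ReflectsIsomorphisms]
    (hbc : ∀ c' : C',
      IsIso (adjP.unit.app (U.obj (Qs.obj c')) ≫
        Ps.map (σ.inv.app (Qs.obj c')) ≫ Ps.map (V.map (adjQ.counit.app c')))) :
    (canonicalToPseudoPullback Q U P V σ).IsEquivalence := by
  set F := canonicalToPseudoPullback Q U P V σ with hF
  haveI : F.Faithful := ⟨by
    intro c c₁ f g h
    apply Q.map_injective
    exact congrArg (fun k => CommaMorphism.right k.hom) h⟩
  haveI : F.Full := ⟨by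
    intro c c₁ φ
    refine ⟨Q.preimage (CommaMorphism.right φ.hom), ?_⟩
    have hw : P.map (CommaMorphism.left φ.hom) ≫ σ.inv.app c₁ =
        σ.inv.app c ≫ V.map (CommaMorphism.right φ.hom) := CommaMorphism.w φ.hom
    have h1 : P.map (U.map (Q.preimage (CommaMorphism.right φ.hom))) ≫ σ.inv.app c₁ =
        σ.inv.app c ≫ V.map (CommaMorphism.right φ.hom) := by
      have := σ.inv.naturality (Q.preimage (CommaMorphism.right φ.hom))
      simp [Q.map_preimage (X := c) (Y := c₁) φ.hom.right] at this
      exact this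
    apply ObjectProperty.hom_ext
    apply CommaMorphism.ext
    · apply P.map_injective
      have : IsIso (σ.inv.app c₁) := inferInstance
      refine (cancel_mono (σ.inv.app c₁)).mp ?_
      show P.map (U.map (Q.preimage (CommaMorphism.right φ.hom))) ≫ σ.inv.app c₁ =
        P.map (CommaMorphism.left φ.hom) ≫ σ.inv.app c₁
      rw [h1, hw]
    · exact Q.map_preimage _⟩
  haveI : F.EssSurj := by
    constructor
    intro X
    obtain ⟨⟨d, c', φ⟩, hX⟩ := X
    haveI : IsIso φ := hX
    let l : U.obj (Qs.obj c') ⟶ d :=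
      P.preimage (σ.inv.app (Qs.obj c') ≫ V.map (adjQ.counit.app c') ≫ inv φ)
    have hl : P.map l = σ.inv.app (Qs.obj c') ≫ V.map (adjQ.counit.app c') ≫ inv φ :=
      P.map_preimage _
    haveI : IsIso (Ps.map (P.map l)) := by
      haveI := hbc c'
      have : Ps.map (P.map l) = inv (adjP.unit.app (U.obj (Qs.obj c'))) ≫
          ((adjP.unit.app (U.obj (Qs.obj c')) ≫ Ps.map (σ.inv.app (Qs.obj c')) ≫
            Ps.map (V.map (adjQ.counit.app c'))) ≫ Ps.map (inv φ)) := by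
        rw [hl]
        simp
      rw [this]
      infer_instance
    haveI : IsIso l := by
      have hn : l ≫ adjP.unit.app d =
          adjP.unit.app (U.obj (Qs.obj c')) ≫ Ps.map (P.map l) := by
        simpa using adjP.unit.naturality l
      have : l = adjP.unit.app (U.obj (Qs.obj c')) ≫ Ps.map (P.map l) ≫
          inv (adjP.unit.app d) := by
        rw [← Category.assoc, ← hn]
        simp
      rw [this]
      infer_instance
    haveI : IsIso (adjQ.counit.app c') := by
      haveI : IsIso (V.map (adjQ.counit.app c')) := by
        have : V.map (adjQ.counit.app c') = σ.hom.app (Qs.obj c') ≫ P.map l ≫ φ := by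
          rw [hl]
          simp
        rw [this]
        infer_instance
      exact isIso_of_reflects_iso _ V
    let e1 := asIso l
    let e2 := asIso (adjQ.counit.app c')
    refine ⟨Qs.obj c', ⟨ObjectProperty.isoMk (fun Z : Comma P V => IsIso Z.hom)
      (Comma.isoMk e1 e2 ?_)⟩⟩
    show P.map l ≫ φ = σ.inv.app (Qs.obj c') ≫ V.map (adjQ.counit.app c')
    rw [hl]
    simp
  exact { faithful := ‹_›, full := ‹_›, essSurj := ‹_› }
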